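/- Let A be an m × n real matrix and b ∈ ℝ^m, and let P = {x ∈ ℝ^n : x ≥ 0 componentwise and A·x = b}. If x is an extreme point of P, then the columns of A indexed by the support {j : x_j ≠ 0} are linearly independent; in particular, the number of nonzero coordinates of x is at most m. -/

import Mathlib

/-- **Extreme points of `{x ≥ 0, A x = b}` have linearly independent support columns.**
If `x` is an extreme point of `P = {x : ℝⁿ | x ≥ 0, A x = b}`, then the columns of `A`
indexed by the support of `x` are linearly independent; in particular, the support has at
most `m` elements. -/
theorem extremePoint_support_columns_linearIndependent
    (m n : ℕ) (A : Matrix (Fin m) (Fin n) ℝ) (b : Fin m → ℝ)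
    (P : Set (Fin n → ℝ))
    (hP : P = {x | (∀ j, 0 ≤ x j) ∧ A.mulVec x = b})
    (x : Fin n → ℝ) (hx : x ∈ Set.extremePoints ℝ P) :
    LinearIndependent ℝ (fun j : {j : Fin n // x j ≠ 0} => fun i : Fin m => A i j.val) ∧
      Set.ncard {j : Fin n | x j ≠ 0} ≤ m := by
  obtain ⟨hxP, hext⟩ := hx
  have hxpos : ∀ j, 0 ≤ x j := by rw [hP] at hxP; exact hxP.1
  have hli : LinearIndependent ℝ
      (fun j : {j : Fin n // x j ≠ 0} => fun i : Fin m => A i j.val) := by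
    rw [Fintype.linearIndependent_iff]
    intro g hg
    by_contra hcon
    push_neg at hcon
    obtain ⟨j0, hj0⟩ := hcon
    -- extend g to a vector c on Fin n
    set c : Fin n → ℝ := fun j => if h : x j ≠ 0 then g ⟨j, h⟩ else 0 with hc
    have hc0 : A.mulVec c = 0 := by
      funext i
      show A.mulVec c i = 0
      have := congrFun hg i
      simp only [Finset.sum_apply, Pi.smul_apply, smul_eq_mul, Pi.zero_apply] at this
      rw [Matrix.mulVec, dotProduct]
      rw [show (0 : ℝ) = ∑ j : {j : Fin n // x j ≠ 0}, g j * A i j.val from this.symm]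
      have h1 : ∀ j : {j : Fin n // x j ≠ 0}, g j * A i j.val = A i j.val * c j.val := by
        intro j; simp [hc, j.prop, mul_comm]
      rw [Finset.sum_congr rfl (fun j _ => h1 j)]
      rw [← Finset.sum_subtype (Finset.univ.filter (fun j => x j ≠ 0))
        (p := fun j => x j ≠ 0) (by simp) (fun j => A i j * c j)]
      refine (Finset.sum_filter_of_ne ?_).symm
      intro j _ hne
      intro h0
      apply hne
      simp [hc, h0]
    have hcj0 : c j0.val ≠ 0 := by simp [hc, j0.prop, hj0]
    -- the finset of indices where c is nonzero
    set s : Finset (Fin n) := Finset.univ.filter (fun j => c j ≠ 0) with hs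
    have hsne : s.Nonempty := ⟨j0.val, by simp [hs, hcj0]⟩
    set ε : ℝ := s.inf' hsne (fun j => x j / |c j|) with hε
    have hxposc : ∀ j ∈ s, 0 < x j := by
      intro j hj
      simp only [hs, Finset.mem_filter] at hj
      have : x j ≠ 0 := by
        intro h; apply hj.2; simp [hc, h]
      exact lt_of_le_of_ne (hxpos j) (Ne.symm this)
    have hεpos : 0 < ε := by
      rw [hε]
      apply Finset.lt_inf'_iff (hsne) (a := 0) |>.mpr
      intro j hj
      have hcj : c j ≠ 0 := by simpa [hs] using (Finset.mem_filter.mp hj).2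
      exact div_pos (hxposc j hj) (abs_pos.mpr hcj)
    have hbound : ∀ j, |ε * c j| ≤ x j := by
      intro j
      by_cases hcj : c j = 0
      · simp [hcj, hxpos j]
      · have hjs : j ∈ s := by simp [hs, hcj]
        have h1 : ε ≤ x j / |c j| := Finset.inf'_le _ hjs
        rw [abs_mul, abs_of_pos hεpos]
        calc ε * |c j| ≤ (x j / |c j|) * |c j| := by
              apply mul_le_mul_of_nonneg_right h1 (abs_nonneg _)
          _ = x j := by field_simp
    -- y and z
    have hmem : ∀ (t : ℝ), |t| = ε → x + t • c ∈ P := by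
      intro t ht
      rw [hP]
      constructor
      · intro j
        have := hbound j
        have habs : |t * c j| ≤ x j := by
          rw [abs_mul, ht, ← abs_of_pos hεpos, ← abs_mul]; exact hbound j
        have := abs_le.mp habs
        simp only [Pi.add_apply, Pi.smul_apply, smul_eq_mul]
        linarith [this.1]
      · rw [Matrix.mulVec_add, Matrix.mulVec_smul, hc0]
        simp
        rw [hP] at hxP; exact hxP.2
    have hy : x + ε • c ∈ P := hmem ε (abs_of_pos hεpos)
    have hz : x + (-ε) • c ∈ P := hmem (-ε) (by rw [abs_neg]; exact abs_of_pos hεpos)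
    have hseg : x ∈ openSegment ℝ (x + ε • c) (x + (-ε) • c) := by
      refine ⟨1/2, 1/2, by norm_num, by norm_num, by norm_num, ?_⟩
      funext j
      simp only [Pi.add_apply, Pi.smul_apply, smul_eq_mul]
      ring
    have := hext hy hz hseg
    have hzero : ε • c = 0 := by
      have h := congrArg (fun v => v - x) this
      simpa [add_sub_cancel_left] using h
    have : c j0.val = 0 := by
      have := congrFun hzero j0.val
      simp only [Pi.smul_apply, smul_eq_mul, Pi.zero_apply] at this
      rcases mul_eq_zero.mp this with h | h
      · exact absurd h (ne_of_gt hεpos)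
      · exact h
    exact hcj0 this
  refine ⟨hli, ?_⟩
  have hcard : Fintype.card {j : Fin n // x j ≠ 0} ≤ m := by
    have := hli.fintype_card_le_finrank
    simpa using this
  calc Set.ncard {j : Fin n | x j ≠ 0} = Nat.card {j : Fin n // x j ≠ 0} :=
        (Nat.card_coe_set_eq _).symm
    _ = Fintype.card {j : Fin n // x j ≠ 0} := Nat.card_eq_fintype_card
    _ ≤ m := hcard
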